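/- Let d ≥ 1, E := ℝ^d × ℝ^d with the Euclidean inner product, J : E → E the linear map J(q,p) = (p,−q), α ≠ 0 a real number, and L := α • J. Let p be odd with 1 ≤ p ≤ s, and let α_1, …, α_s be real numbers with α_k = 1/k! for all k ≤ p; set α_{p+1} := 0 if p = s. Fix u₀ ∈ E with u₀ ≠ 0 and for h ≠ 0 define u₊(h) := u₀ + Σ_{k=1}^{s} α_k h^k L^k u₀ and γ(h) := 2⟨u₀ − u₊(h), u₀⟩ / ‖u₊(h) − u₀‖². Then, as h → 0, γ(h) = 1 − 2·(−1)^{(p+1)/2}·(α_{p+1} − 1/(p+1)!)·(α h)^{p−1} + O(h^{p+1}). -/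

import Mathlib

open scoped RealInnerProductSpace
open Asymptotics Filter Topology

noncomputable section

/-- The phase space `E = ℝ^d × ℝ^d`, equipped with the Euclidean inner product. -/
abbrev E (d : ℕ) : Type :=
  WithLp 2 (EuclideanSpace ℝ (Fin d) × EuclideanSpace ℝ (Fin d))

/-- The canonical symplectic rotation `J(q,p) = (p, -q)` as a continuous linear map. -/
def Jclm (d : ℕ) : E d →L[ℝ] E d :=
  ((WithLp.prodContinuousLinearEquiv 2 ℝ (EuclideanSpace ℝ (Fin d))
      (EuclideanSpace ℝ (Fin d))).symm : _ →L[ℝ] E d) ∘L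
    ((ContinuousLinearMap.snd ℝ (EuclideanSpace ℝ (Fin d)) (EuclideanSpace ℝ (Fin d))).prod
      (-(ContinuousLinearMap.fst ℝ (EuclideanSpace ℝ (Fin d)) (EuclideanSpace ℝ (Fin d))))) ∘L
    ((WithLp.prodContinuousLinearEquiv 2 ℝ (EuclideanSpace ℝ (Fin d))
      (EuclideanSpace ℝ (Fin d))) : E d →L[ℝ] _)

section RelaxAuxJ

lemma RelaxAux.J_J {d : ℕ} (u : E d) : Jclm d (Jclm d u) = -u := rfl

lemma RelaxAux.J_inner_self {d : ℕ} (u : E d) : ⟪Jclm d u, u⟫ = 0 := by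
  simp [Jclm, WithLp.prod_inner_apply, mul_comm]
  linarith [real_inner_comm (WithLp.fst u) (WithLp.snd u)]

lemma RelaxAux.J_inner_J {d : ℕ} (u v : E d) : ⟪Jclm d u, Jclm d v⟫ = ⟪u, v⟫ := by
  simp [Jclm, WithLp.prod_inner_apply]
  ring

end RelaxAuxJ
noncomputable section
namespace RelaxAux
def Sf (α : ℝ) (a : ℕ → ℝ) (s m : ℕ) (h : ℝ) : ℂ :=
  ∑ k ∈ Finset.Icc m s, (a k : ℂ) * (((α * h : ℝ) : ℂ) * Complex.I) ^ k

def Ef (α : ℝ) (n : ℕ) (h : ℝ) : ℂ :=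
  ∑ k ∈ Finset.range n, (((α * h : ℝ) : ℂ) * Complex.I) ^ k / (Nat.factorial k : ℂ)

def rf (α : ℝ) (n : ℕ) (h : ℝ) : ℂ :=
  Complex.exp (((α * h : ℝ) : ℂ) * Complex.I) - Ef α n h

lemma pow_isBigO {m n : ℕ} (hmn : m ≤ n) : (fun h : ℝ => h ^ n) =O[𝓝 0] fun h => h ^ m := by
  rcases eq_or_lt_of_le hmn with rfl | hlt
  · exact isBigO_refl _ _
  · exact (isLittleO_pow_pow hlt).isBigO

lemma cpow_isBigO (α : ℝ) (c : ℂ) (k m : ℕ) (hmk : m ≤ k) :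
    (fun h : ℝ => c * (((α * h : ℝ) : ℂ) * Complex.I) ^ k) =O[𝓝 0] fun h => h ^ m := by
  have h1 : (fun h : ℝ => c * (((α * h : ℝ) : ℂ) * Complex.I) ^ k) =O[𝓝 0]
      fun h : ℝ => h ^ k := by
    rw [isBigO_iff]
    refine ⟨‖c‖ * |α| ^ k, Eventually.of_forall fun x => ?_⟩
    have : ‖c * (((α * x : ℝ) : ℂ) * Complex.I) ^ k‖ = ‖c‖ * (|α| ^ k * |x| ^ k) := by
      simp [norm_mul, norm_pow, abs_mul, mul_pow]
    rw [this, Real.norm_eq_abs, _root_.abs_pow]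
    ring_nf
    exact le_rfl
  exact h1.trans (pow_isBigO hmk)

lemma Sf_isBigO (α : ℝ) (a : ℕ → ℝ) (s m : ℕ) :
    Sf α a s m =O[𝓝 0] fun h => h ^ m := by
  apply Asymptotics.IsBigO.fun_sum
  intro k hk
  exact cpow_isBigO α _ k m (Finset.mem_Icc.mp hk).1

lemma rf_isBigO (α : ℝ) (n : ℕ) (hn : 0 < n) : rf α n =O[𝓝 0] fun h => h ^ n := by
  rw [isBigO_iff]
  refine ⟨|α| ^ n * ((n.succ : ℝ) * ((n.factorial : ℝ) * n)⁻¹), ?_⟩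
  have h1 : Tendsto (fun h : ℝ => α * h) (𝓝 0) (𝓝 0) := by
    exact Continuous.tendsto' (by continuity) 0 0 (by simp)
  have h2 : ∀ᶠ y in 𝓝 (0:ℝ), |y| ≤ 1 := by
    have := eventually_abs_sub_lt (0:ℝ) one_pos
    filter_upwards [this] with y hy
    simpa using hy.le
  filter_upwards [h1.eventually h2] with h hh
  have habs : ‖((α * h : ℝ) : ℂ) * Complex.I‖ = |α * h| := by
    rw [norm_mul, Complex.norm_I, Complex.norm_real, mul_one, Real.norm_eq_abs]
  have := Complex.exp_bound (x := ((α * h : ℝ) : ℂ) * Complex.I) (by rw [habs]; exact hh) hn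
  rw [rf, Ef]
  calc ‖Complex.exp _ - _‖ ≤ ‖((α * h : ℝ) : ℂ) * Complex.I‖ ^ n *
        ((n.succ : ℝ) * ((n.factorial : ℝ) * n)⁻¹) := this
    _ ≤ _ := by
        rw [habs, abs_mul, mul_pow, Real.norm_eq_abs, _root_.abs_pow]
        ring_nf
        exact le_rfl
lemma I_pow_even (k : ℕ) (hk : Even k) : Complex.I ^ k = (((-1 : ℝ) ^ (k / 2) : ℝ) : ℂ) := by
  obtain ⟨j, rfl⟩ := hk
  have : j + j = 2 * j := by ring
  rw [this, pow_mul, Complex.I_sq]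
  push_cast
  congr 1
  omega

lemma I_pow_re_odd (k : ℕ) (hk : Odd k) : (Complex.I ^ k).re = 0 := by
  obtain ⟨j, rfl⟩ := hk
  rw [pow_add, pow_one, pow_mul, Complex.I_sq]
  have : ((-1 : ℂ) ^ j) = (((-1 : ℝ) ^ j : ℝ) : ℂ) := by push_cast; ring
  rw [this, Complex.re_ofReal_mul, Complex.I_re, mul_zero]

lemma I_pow_im_even (k : ℕ) (hk : Even k) : (Complex.I ^ k).im = 0 := by
  rw [I_pow_even k hk, Complex.ofReal_im]

lemma term_re (a x : ℝ) (k : ℕ) : ((a : ℂ) * (((x : ℝ) : ℂ) * Complex.I) ^ k).re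
    = a * x ^ k * (Complex.I ^ k).re := by
  rw [mul_pow, ← Complex.ofReal_pow, ← mul_assoc, ← Complex.ofReal_mul,
    Complex.re_ofReal_mul]

lemma term_im (a x : ℝ) (k : ℕ) : ((a : ℂ) * (((x : ℝ) : ℂ) * Complex.I) ^ k).im
    = a * x ^ k * (Complex.I ^ k).im := by
  rw [mul_pow, ← Complex.ofReal_pow, ← mul_assoc, ← Complex.ofReal_mul,
    Complex.im_ofReal_mul]

lemma rpow_isBigO (α c : ℝ) (k m : ℕ) (hmk : m ≤ k) :
    (fun h : ℝ => c * (α * h) ^ k) =O[𝓝 0] fun h => h ^ m := by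
  have h1 : (fun h : ℝ => c * (α * h) ^ k) =O[𝓝 0] fun h : ℝ => h ^ k := by
    rw [isBigO_iff]
    refine ⟨|c| * |α| ^ k, Eventually.of_forall fun x => ?_⟩
    rw [Real.norm_eq_abs, Real.norm_eq_abs]
    rw [show |c * (α * x) ^ k| = |c| * |α| ^ k * |x ^ k| by
      rw [abs_mul, mul_pow, abs_mul, _root_.abs_pow, _root_.abs_pow, mul_assoc]]
  exact h1.trans (by
    rcases eq_or_lt_of_le hmk with rfl | hlt
    · exact isBigO_refl _ _
    · exact (isLittleO_pow_pow hlt).isBigO)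

lemma Sf_re_isBigO (α : ℝ) (a : ℕ → ℝ) (s m : ℕ) (hm : Odd m) :
    (fun h => (Sf α a s m h).re) =O[𝓝 0] fun h => h ^ (m + 1) := by
  have : ∀ h : ℝ, (Sf α a s m h).re
      = ∑ k ∈ Finset.Icc m s, (a k * (Complex.I ^ k).re) * (α * h) ^ k := by
    intro h
    rw [Sf, Complex.re_sum]
    refine Finset.sum_congr rfl fun k _ => ?_
    rw [term_re]; ring
  simp only [this]
  apply Asymptotics.IsBigO.fun_sum
  intro k hk
  rcases Nat.even_or_odd k with hke | hko
  · have hk1 : m + 1 ≤ k := by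
      have := (Finset.mem_Icc.mp hk).1
      rcases eq_or_lt_of_le this with rfl | h
      · exact absurd hke (Nat.not_even_iff_odd.mpr hm)
      · omega
    exact rpow_isBigO α _ k (m+1) hk1
  · simp only [I_pow_re_odd k hko, mul_zero, zero_mul]
    exact isBigO_zero _ _
lemma Sf_im_isBigO (α : ℝ) (a : ℕ → ℝ) (s m : ℕ) (hm : Even m) :
    (fun h => (Sf α a s m h).im) =O[𝓝 0] fun h => h ^ (m + 1) := by
  have : ∀ h : ℝ, (Sf α a s m h).im
      = ∑ k ∈ Finset.Icc m s, (a k * (Complex.I ^ k).im) * (α * h) ^ k := by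
    intro h
    rw [Sf, Complex.im_sum]
    refine Finset.sum_congr rfl fun k _ => ?_
    rw [term_im]; ring
  simp only [this]
  apply Asymptotics.IsBigO.fun_sum
  intro k hk
  rcases Nat.even_or_odd k with hke | hko
  · simp only [I_pow_im_even k hke, mul_zero, zero_mul]
    exact isBigO_zero _ _
  · have hk1 : m + 1 ≤ k := by
      have := (Finset.mem_Icc.mp hk).1
      rcases eq_or_lt_of_le this with rfl | h
      · exact absurd hm (Nat.not_even_iff_odd.mpr hko)
      · omega
    exact rpow_isBigO α _ k (m+1) hk1

lemma Sf_split (α : ℝ) (a : ℕ → ℝ) (s m : ℕ) (hms : m ≤ s) (h : ℝ) :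
    Sf α a s m h = (a m : ℂ) * (((α * h : ℝ) : ℂ) * Complex.I) ^ m + Sf α a s (m + 1) h := by
  rw [Sf, Sf, Finset.Icc_eq_cons_Ioc hms, Finset.sum_cons, ← Finset.Icc_add_one_left_eq_Ioc]


lemma re_isBigO {l : Filter ℝ} {f : ℝ → ℂ} {g : ℝ → ℝ} (hf : f =O[l] g) :
    (fun h => (f h).re) =O[l] g :=
  (isBigO_of_le l fun x => by
    rw [Real.norm_eq_abs]
    exact Complex.abs_re_le_norm (f x)).trans hf

lemma im_isBigO {l : Filter ℝ} {f : ℝ → ℂ} {g : ℝ → ℝ} (hf : f =O[l] g) :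
    (fun h => (f h).im) =O[l] g :=
  (isBigO_of_le l fun x => by
    rw [Real.norm_eq_abs]
    exact Complex.abs_im_le_norm (f x)).trans hf

lemma conj_isBigO {l : Filter ℝ} {f : ℝ → ℂ} {g : ℝ → ℝ} (hf : f =O[l] g) :
    (fun h => (starRingEnd ℂ) (f h)) =O[l] g :=
  (isBigO_of_le l fun x => by rw [RCLike.norm_conj]).trans hf

lemma normSq_isBigO {l : Filter ℝ} {f : ℝ → ℂ} {n : ℕ} (hf : f =O[l] fun h : ℝ => h ^ n) :
    (fun h => Complex.normSq (f h)) =O[l] fun h => h ^ n * h ^ n := by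
  have h1 : (fun h => Complex.normSq (f h)) =O[l] fun h => f h * f h := by
    refine isBigO_of_le l fun x => ?_
    have he : ‖Complex.normSq (f x)‖ = ‖f x‖ * ‖f x‖ := by
      rw [Real.norm_eq_abs, _root_.abs_of_nonneg (Complex.normSq_nonneg _),
        Complex.normSq_eq_norm_sq, sq]
    rw [he, ← norm_mul]
  exact h1.trans (hf.mul hf)

lemma expmul_isBigO {l : Filter ℝ} (α : ℝ) {f : ℝ → ℂ} {g : ℝ → ℝ} (hf : f =O[l] g) :
    (fun h => Complex.exp (((α * h : ℝ) : ℂ) * Complex.I) * (starRingEnd ℂ) (f h)) =O[l] g :=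
  (isBigO_of_le l fun x => by
    rw [norm_mul, RCLike.norm_conj, Complex.norm_exp_ofReal_mul_I,
      one_mul]).trans hf

end RelaxAux

namespace RelaxAux
set_option maxHeartbeats 1000000 in
lemma key_asymp (α : ℝ) (hα : α ≠ 0) (s p : ℕ) (hpodd : Odd p) (hp1 : 1 ≤ p) (hps : p ≤ s)
    (αc : ℕ → ℝ) (hαc : ∀ k : ℕ, 1 ≤ k → k ≤ p → αc k = 1 / (Nat.factorial k : ℝ))
    (hαs : p = s → αc (p + 1) = 0) :
    (fun h : ℝ => (-2 * (Sf α αc s 1 h).re) / Complex.normSq (Sf α αc s 1 h)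
      - (1 - 2 * (-1 : ℝ) ^ ((p + 1) / 2) * (αc (p + 1) - 1 / (Nat.factorial (p + 1) : ℝ))
        * (α * h) ^ (p - 1)))
      =O[𝓝[≠] (0 : ℝ)] fun h => h ^ (p + 1) := by
  obtain ⟨t, rfl⟩ := hpodd
  simp only [show 2*t+1+1 = 2*t+2 from by omega, show 2*t+1-1 = 2*t from by omega,
    show (2*t+2)/2 = t+1 from by omega] at hαs ⊢
  have hps' : 2*t+1 ≤ s := hps
  set ε : ℝ := (-1 : ℝ) ^ (t+1) with hε
  set cc : ℝ := 2 * ε * (αc (2*t+2) - 1/(Nat.factorial (2*t+2) : ℝ)) with hcc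
  have hs1 : 1 ≤ s := by omega
  -- splitting facts
  have hsplit1 : ∀ h : ℝ, Sf α αc s 1 h
      = ((α*h : ℝ) : ℂ) * Complex.I + Sf α αc s 2 h := by
    intro h
    rw [Sf_split α αc s 1 hs1 h, hαc 1 (by omega) (by omega)]
    norm_num
  have hsplitp : ∀ h : ℝ, Sf α αc s (2*t+2) h
      = (αc (2*t+2) : ℂ) * (((α*h : ℝ) : ℂ) * Complex.I)^(2*t+2) + Sf α αc s (2*t+3) h := by
    intro h
    by_cases hc : 2*t+2 ≤ s
    · have := Sf_split α αc s (2*t+2) hc h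
      rw [this, show 2*t+2+1 = 2*t+3 from by omega]
    · have h0 : αc (2*t+2) = 0 := hαs (by omega)
      rw [Sf, Sf, h0, Finset.Icc_eq_empty (by omega), Finset.Icc_eq_empty (by omega)]
      simp
  have hEf1 : ∀ h : ℝ, Ef α 1 h = 1 := by
    intro h; simp [Ef]
  have hEf2 : ∀ h : ℝ, Ef α 2 h = 1 + ((α*h : ℝ) : ℂ) * Complex.I := by
    intro h
    rw [Ef, Finset.sum_range_succ, Finset.sum_range_one]
    norm_num
  have hone : ∀ h : ℝ, (1 : ℂ) + Sf α αc s 1 h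
      = Ef α (2*t+2) h + Sf α αc s (2*t+2) h := by
    intro h
    rw [Ef, Sf, Sf]
    have e1 : Finset.range (2*t+2) = Finset.Icc 0 (2*t+1) := by
      rw [Finset.range_eq_Ico, show 2*t+2 = (2*t+1)+1 from by omega, Finset.Ico_add_one_right_eq_Icc]
    rw [e1, Finset.Icc_eq_cons_Ioc (Nat.zero_le _), Finset.sum_cons]
    have e2 : Finset.Icc 1 s = Finset.Ioc 0 s := by
      rw [show (1:ℕ) = 0+1 from rfl, Finset.Icc_add_one_left_eq_Ioc]
    have e3 : Finset.Icc (2*t+2) s = Finset.Ioc (2*t+1) s := by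
      rw [show 2*t+2 = (2*t+1)+1 from by omega, Finset.Icc_add_one_left_eq_Ioc]
    rw [e2, e3, ← Finset.sum_Ioc_consecutive _ (Nat.zero_le (2*t+1)) hps']
    have e4 : ∑ k ∈ Finset.Ioc 0 (2*t+1), (αc k : ℂ) * (((α*h : ℝ) : ℂ) * Complex.I) ^ k
        = ∑ k ∈ Finset.Ioc 0 (2*t+1), (((α*h : ℝ) : ℂ) * Complex.I) ^ k / (Nat.factorial k : ℂ) := by
      refine Finset.sum_congr rfl fun k hk => ?_
      obtain ⟨hk1, hk2⟩ := Finset.mem_Ioc.mp hk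
      rw [hαc k (by omega) (by omega)]
      push_cast
      ring
    rw [e4]
    simp only [Nat.factorial_zero, Nat.cast_one]
    ring
  have hrfsplit : ∀ h : ℝ, rf α (2*t+2) h = rf α (2*t+4) h
      + (((α*h : ℝ) : ℂ) * Complex.I)^(2*t+2) / (Nat.factorial (2*t+2) : ℂ)
      + (((α*h : ℝ) : ℂ) * Complex.I)^(2*t+3) / (Nat.factorial (2*t+3) : ℂ) := by
    intro h
    rw [rf, rf]
    have : Ef α (2*t+4) h = Ef α (2*t+2) h
        + (((α*h : ℝ) : ℂ) * Complex.I)^(2*t+2) / (Nat.factorial (2*t+2) : ℂ)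
        + (((α*h : ℝ) : ℂ) * Complex.I)^(2*t+3) / (Nat.factorial (2*t+3) : ℂ) := by
      rw [Ef, Ef, show 2*t+4 = (2*t+3)+1 from by omega, Finset.sum_range_succ,
        show 2*t+3 = (2*t+2)+1 from by omega, Finset.sum_range_succ,
        show (2*t+2)+1 = 2*t+3 from by omega]
    rw [this]
    ring
  have hypow2 : ∀ h : ℝ, (((α*h : ℝ) : ℂ) * Complex.I)^(2*t+2)
      = ((ε * (α*h)^(2*t+2) : ℝ) : ℂ) := by
    intro h
    rw [mul_pow, I_pow_even (2*t+2) ⟨t+1, by ring⟩, show (2*t+2)/2 = t+1 from by omega, hε]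
    push_cast
    ring
  have hypow3 : ∀ h : ℝ, (((α*h : ℝ) : ℂ) * Complex.I)^(2*t+3)
      = ((ε * (α*h)^(2*t+3) : ℝ) : ℂ) * Complex.I := by
    intro h
    rw [show 2*t+3 = (2*t+2)+1 from by omega, pow_succ,
      show (2*t+2)+1 = 2*t+3 from by omega, hypow2 h]
    push_cast
    ring
  have hnse : ∀ h : ℝ, Complex.normSq (Complex.exp (((α*h : ℝ) : ℂ) * Complex.I)) = 1 := by
    intro h
    rw [Complex.normSq_eq_norm_sq, Complex.norm_exp_ofReal_mul_I]
    norm_num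
  -- the big-O of the numerator
  have hNbig : (fun h : ℝ => 1 - Complex.normSq (1 + Sf α αc s 1 h)
      + cc * (α*h)^(2*t) * Complex.normSq (Sf α αc s 1 h)) =O[𝓝 (0:ℝ)]
      fun h => h^(2*t+4) := by
    have heq : (fun h : ℝ => 1 - Complex.normSq (1 + Sf α αc s 1 h)
        + cc * (α*h)^(2*t) * Complex.normSq (Sf α αc s 1 h))
        = fun h : ℝ =>
          (2 * (1/(Nat.factorial (2*t+2) : ℝ) - αc (2*t+2)) * ε * (α*h)^(2*t+2)) * (rf α 2 h).re
          + (2 * ε / (Nat.factorial (2*t+3) : ℝ) * (α*h)^(2*t+3)) * (rf α 1 h).im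
          + 2 * (Complex.exp (((α*h : ℝ) : ℂ) * Complex.I) * (starRingEnd ℂ) (rf α (2*t+4) h)).re
          + (-2) * (Sf α αc s (2*t+3) h).re
          + (-2) * ((rf α 1 h) * (starRingEnd ℂ) (Sf α αc s (2*t+3) h)).re
          + (- Complex.normSq (Sf α αc s (2*t+2) h - rf α (2*t+2) h))
          + (2 * cc * (α*h)^(2*t+1)) * (Sf α αc s 2 h).im
          + (cc * (α*h)^(2*t)) * Complex.normSq (Sf α αc s 2 h) := by
      funext h
      have hA2 : rf α 2 h = Complex.exp (((α*h : ℝ) : ℂ) * Complex.I)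
          - (1 + ((α*h : ℝ) : ℂ) * Complex.I) := by rw [rf, hEf2 h]
      have hA1 : rf α 1 h = Complex.exp (((α*h : ℝ) : ℂ) * Complex.I) - 1 := by
        rw [rf, hEf1 h]
      have hEe : Ef α (2*t+2) h = Complex.exp (((α*h : ℝ) : ℂ) * Complex.I)
          - rf α (2*t+2) h := by rw [rf]; ring
      have he : (Complex.exp (((α*h : ℝ) : ℂ) * Complex.I)).re
            * (Complex.exp (((α*h : ℝ) : ℂ) * Complex.I)).re
          + (Complex.exp (((α*h : ℝ) : ℂ) * Complex.I)).im
            * (Complex.exp (((α*h : ℝ) : ℂ) * Complex.I)).im = 1 := by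
        have := hnse h
        rwa [Complex.normSq_apply] at this
      rw [hone h, hsplitp h, hEe, hrfsplit h, hsplit1 h, hA2, hA1, hypow2 h, hypow3 h, hcc]
      rw [show ((ε * (α*h)^(2*t+2) : ℝ) : ℂ) / ((2*t+2).factorial : ℂ)
          = ((ε * (α*h)^(2*t+2) / ((2*t+2).factorial : ℝ) : ℝ) : ℂ) from by push_cast; ring]
      rw [show ((ε * (α*h)^(2*t+3) : ℝ) : ℂ) * Complex.I / ((2*t+3).factorial : ℂ)
          = ((ε * (α*h)^(2*t+3) / ((2*t+3).factorial : ℝ) : ℝ) : ℂ) * Complex.I from by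
        push_cast; ring]
      simp only [Complex.normSq_apply, Complex.add_re, Complex.add_im, Complex.sub_re,
        Complex.sub_im, Complex.mul_re, Complex.mul_im, Complex.one_re, Complex.one_im,
        Complex.ofReal_re, Complex.ofReal_im, Complex.I_re, Complex.I_im, Complex.conj_re,
        Complex.conj_im]
      linear_combination -he
    rw [heq]
    have hP1 : (fun h : ℝ => (2 * (1/(Nat.factorial (2*t+2) : ℝ) - αc (2*t+2)) * ε * (α*h)^(2*t+2)) * (rf α 2 h).re) =O[𝓝 (0:ℝ)] (fun h : ℝ => h^(2*t+4)) := ((rpow_isBigO α (2 * (1/(Nat.factorial (2*t+2) : ℝ) - αc (2*t+2)) * ε)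
      (2*t+2) (2*t+2) le_rfl).mul (re_isBigO (rf_isBigO α 2 (by omega)))).trans
      (by simp only [← pow_add]; exact pow_isBigO (by omega))
    have hP2 : (fun h : ℝ => (2 * ε / (Nat.factorial (2*t+3) : ℝ) * (α*h)^(2*t+3)) * (rf α 1 h).im) =O[𝓝 (0:ℝ)] (fun h : ℝ => h^(2*t+4)) := ((rpow_isBigO α (2 * ε / (Nat.factorial (2*t+3) : ℝ))
      (2*t+3) (2*t+3) le_rfl).mul (im_isBigO (rf_isBigO α 1 (by omega)))).trans
      (by simp only [← pow_add]; exact pow_isBigO (by omega))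
    have hP3 := ((re_isBigO (expmul_isBigO α (rf_isBigO α (2*t+4) (by omega)))).const_mul_left
      (2:ℝ))
    have hP4 : (fun h : ℝ => (-2:ℝ) * (Sf α αc s (2*t+3) h).re) =O[𝓝 (0:ℝ)] (fun h : ℝ => h^(2*t+4)) := ((Sf_re_isBigO α αc s (2*t+3) ⟨t+1, by omega⟩).const_mul_left (-2:ℝ)).trans
      (pow_isBigO (by omega))
    have hP5 : (fun h : ℝ => (-2:ℝ) * ((rf α 1 h) * (starRingEnd ℂ) (Sf α αc s (2*t+3) h)).re) =O[𝓝 (0:ℝ)] (fun h : ℝ => h^(2*t+4)) := (re_isBigO ((rf_isBigO α 1 (by omega)).mul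
      (conj_isBigO (Sf_isBigO α αc s (2*t+3))))).const_mul_left (-2:ℝ) |>.trans
      (by simp only [← pow_add]; exact pow_isBigO (by omega))
    have hP6 : (fun h : ℝ => - Complex.normSq (Sf α αc s (2*t+2) h - rf α (2*t+2) h)) =O[𝓝 (0:ℝ)] (fun h : ℝ => h^(2*t+4)) := (normSq_isBigO ((Sf_isBigO α αc s (2*t+2)).sub
      (rf_isBigO α (2*t+2) (by omega)))).neg_left.trans
      (by simp only [← pow_add]; exact pow_isBigO (by omega))
    have hP7 : (fun h : ℝ => (2 * cc * (α*h)^(2*t+1)) * (Sf α αc s 2 h).im) =O[𝓝 (0:ℝ)] (fun h : ℝ => h^(2*t+4)) := ((rpow_isBigO α (2*cc) (2*t+1) (2*t+1) le_rfl).mul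
      (Sf_im_isBigO α αc s 2 ⟨1, by omega⟩)).trans
      (by simp only [← pow_add]; exact pow_isBigO (by omega))
    have hP8 : (fun h : ℝ => (cc * (α*h)^(2*t)) * Complex.normSq (Sf α αc s 2 h)) =O[𝓝 (0:ℝ)] (fun h : ℝ => h^(2*t+4)) := ((rpow_isBigO α cc (2*t) (2*t) le_rfl).mul
      (normSq_isBigO (Sf_isBigO α αc s 2))).trans
      (by simp only [← pow_add]; exact pow_isBigO (by omega))
    exact ((((((hP1.add hP2).add hP3).add hP4).add hP5).add hP6).add hP7).add hP8
  -- lower bound for the denominator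
  obtain ⟨C, hC⟩ := isBigO_iff.mp (Sf_isBigO α αc s 2)
  set C' : ℝ := max C 1 with hC'
  have hC'pos : (0:ℝ) < C' := lt_of_lt_of_le one_pos (le_max_right _ _)
  have hαpos : (0:ℝ) < |α| := abs_pos.mpr hα
  have hδ : (0:ℝ) < |α| / (2*C') := by positivity
  have hev : ∀ᶠ h in 𝓝[≠] (0:ℝ),
      h ≠ 0 ∧ ‖Sf α αc s 2 h‖ ≤ C * ‖h^2‖ ∧ |h| < |α|/(2*C') := by
    have h1 : ∀ᶠ h in 𝓝[≠] (0:ℝ), h ≠ 0 := by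
      filter_upwards [self_mem_nhdsWithin] with h hh
      exact hh
    have h2 : ∀ᶠ h in 𝓝[≠] (0:ℝ), ‖Sf α αc s 2 h‖ ≤ C * ‖h^2‖ :=
      (nhdsWithin_le_nhds) hC
    have h3 : ∀ᶠ h in 𝓝 (0:ℝ), |h| < |α|/(2*C') := by
      have := eventually_abs_sub_lt (0:ℝ) hδ
      filter_upwards [this] with y hy
      simpa using hy
    exact h1.and (h2.and (nhdsWithin_le_nhds h3))
  have hlow : ∀ᶠ h in 𝓝[≠] (0:ℝ),
      α^2/4 * h^2 ≤ Complex.normSq (Sf α αc s 1 h) ∧ h ≠ 0 := by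
    filter_upwards [hev] with h ⟨h0, hS, hd⟩
    refine ⟨?_, h0⟩
    have hy : ‖((α*h : ℝ) : ℂ) * Complex.I‖ = |α| * |h| := by
      rw [norm_mul, Complex.norm_I,
        Complex.norm_real, Real.norm_eq_abs, mul_one, abs_mul]
    have hS2 : ‖Sf α αc s 2 h‖ ≤ |α|/2 * |h| := by
      have hb : C * ‖h^2‖ ≤ C' * (|h| * |h|) := by
        rw [Real.norm_eq_abs, _root_.abs_pow, sq]
        have : (0:ℝ) ≤ |h| * |h| := mul_nonneg (abs_nonneg _) (abs_nonneg _)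
        exact mul_le_mul_of_nonneg_right (le_max_left _ _) this
      have hc : C' * (|h| * |h|) ≤ |α|/2 * |h| := by
        have h4 : C' * |h| ≤ |α|/2 := by
          have := le_of_lt hd
          calc C' * |h| ≤ C' * (|α|/(2*C')) := by
                exact mul_le_mul_of_nonneg_left this (le_of_lt hC'pos)
            _ = |α|/2 := by field_simp
        calc C' * (|h| * |h|) = (C' * |h|) * |h| := by ring
          _ ≤ (|α|/2) * |h| := mul_le_mul_of_nonneg_right h4 (abs_nonneg _)
      exact le_trans hS (le_trans hb hc)
    have hz : |α|/2 * |h| ≤ ‖Sf α αc s 1 h‖ := by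
      rw [hsplit1 h]
      have := norm_sub_le (((α*h : ℝ) : ℂ) * Complex.I + Sf α αc s 2 h) (Sf α αc s 2 h)
      simp only [add_sub_cancel_right] at this
      rw [hy] at this
      linarith
    have : (|α|/2 * |h|)^2 ≤ ‖Sf α αc s 1 h‖^2 := by
      have h5 : (0:ℝ) ≤ |α|/2 * |h| := by positivity
      exact pow_le_pow_left₀ h5 hz 2
    calc α^2/4 * h^2 = (|α|/2 * |h|)^2 := by
          rw [mul_pow, div_pow, _root_.sq_abs, _root_.sq_abs]
          norm_num
      _ ≤ ‖Sf α αc s 1 h‖^2 := this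
      _ = Complex.normSq (Sf α αc s 1 h) := by
          rw [Complex.normSq_eq_norm_sq]
  have hOlow : (fun h : ℝ => h^2) =O[𝓝[≠] (0:ℝ)]
      fun h => Complex.normSq (Sf α αc s 1 h) := by
    rw [isBigO_iff]
    refine ⟨4/α^2, ?_⟩
    filter_upwards [hlow] with h ⟨hh, h0⟩
    have hα2 : (0:ℝ) < α^2 := by positivity
    rw [Real.norm_eq_abs, Real.norm_eq_abs, _root_.abs_of_nonneg (sq_nonneg h),
      _root_.abs_of_nonneg (Complex.normSq_nonneg _)]
    have hkey := mul_le_mul_of_nonneg_left hh (by positivity : (0:ℝ) ≤ 4/α^2)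
    have heq4 : 4/α^2 * (α^2/4*h^2) = h^2 := by field_simp
    linarith
  have hinv : (fun h : ℝ => (Complex.normSq (Sf α αc s 1 h))⁻¹) =O[𝓝[≠] (0:ℝ)]
      fun h => (h^2)⁻¹ := by
    refine hOlow.inv_rev ?_
    filter_upwards [self_mem_nhdsWithin] with h h0 hh
    exact absurd hh (pow_ne_zero 2 h0)
  have hne : ∀ᶠ h in 𝓝[≠] (0:ℝ), Complex.normSq (Sf α αc s 1 h) ≠ 0 := by
    filter_upwards [hlow] with h ⟨hh, h0⟩
    have : (0:ℝ) < α^2/4 * h^2 := by positivity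
    linarith
  have hmain := (hNbig.mono nhdsWithin_le_nhds).mul hinv
  refine hmain.congr' ?_ ?_
  · filter_upwards [hne] with h hn
    have hexp : Complex.normSq (1 + Sf α αc s 1 h)
        = 1 + 2*(Sf α αc s 1 h).re + Complex.normSq (Sf α αc s 1 h) := by
      simp only [Complex.normSq_apply, Complex.add_re, Complex.add_im, Complex.one_re,
        Complex.one_im]
      ring
    rw [hexp]
    field_simp
    ring
  · filter_upwards [self_mem_nhdsWithin] with h h0
    have h0' : (h:ℝ) ≠ 0 := h0
    rw [show 2*t+4 = (2*t+2)+2 from by omega, pow_add, mul_assoc,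
      mul_inv_cancel₀ (pow_ne_zero 2 h0'), mul_one]

end RelaxAux


/-- (Expansion (A.5) of the paper.) For the linear Euclidean Hamiltonian system
`u' = L u` with `L = α • J`, `α ≠ 0`, and an explicit `s`-stage Runge–Kutta method of
odd order `p ≤ s` (monomial coefficients `αc k = 1/k!` for `k ≤ p`; `αc (p+1) = 0` if
`p = s`), the relaxation parameter satisfies
`γ(h) = 1 - 2 (-1)^{(p+1)/2} (αc_{p+1} - 1/(p+1)!) (α h)^{p-1} + O(h^{p+1})`
as `h → 0`. -/
theorem relaxation_parameter_linear_expansion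
    (d : ℕ) (hd : 1 ≤ d) (α : ℝ) (hα : α ≠ 0)
    (s p : ℕ) (hpodd : Odd p) (hp1 : 1 ≤ p) (hps : p ≤ s)
    (αc : ℕ → ℝ) (hαc : ∀ k : ℕ, 1 ≤ k → k ≤ p → αc k = 1 / (Nat.factorial k : ℝ))
    (hαs : p = s → αc (p + 1) = 0)
    (u₀ : E d) (hu₀ : u₀ ≠ 0)
    (L : E d →L[ℝ] E d) (hL : L = α • Jclm d)
    (uplus : ℝ → E d)
    (hup : ∀ h : ℝ, uplus h = u₀ + ∑ k ∈ Finset.Icc 1 s, (αc k * h ^ k) • (L ^ k) u₀)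
    (γ : ℝ → ℝ) (hγ : ∀ h : ℝ, γ h = 2 * ⟪u₀ - uplus h, u₀⟫ / ‖uplus h - u₀‖ ^ 2) :
    (fun h : ℝ => γ h - (1 - 2 * (-1 : ℝ) ^ ((p + 1) / 2)
        * (αc (p + 1) - 1 / (Nat.factorial (p + 1) : ℝ)) * (α * h) ^ (p - 1)))
      =O[𝓝[≠] (0 : ℝ)] fun h => h ^ (p + 1) := by
  have hLk : ∀ k : ℕ, (L ^ k) u₀ = (((α : ℂ) * Complex.I) ^ k).re • u₀
      + (((α : ℂ) * Complex.I) ^ k).im • Jclm d u₀ := by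
    intro k
    induction k with
    | zero => simp
    | succ n ih =>
      rw [pow_succ', pow_succ']
      rw [ContinuousLinearMap.mul_apply, ih]
      set w := ((α:ℂ) * Complex.I) ^ n with hw
      have hre : ((α:ℂ) * Complex.I * w).re = -(α * w.im) := by
        rw [mul_assoc, Complex.re_ofReal_mul]; simp [Complex.mul_re]
      have him : ((α:ℂ) * Complex.I * w).im = α * w.re := by
        rw [mul_assoc, Complex.im_ofReal_mul]; simp [Complex.mul_im]
      rw [hre, him, map_add, map_smul, map_smul, hL]
      simp only [ContinuousLinearMap.coe_smul', Pi.smul_apply]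
      rw [RelaxAux.J_J]
      module
  have hdiff : ∀ h : ℝ, uplus h - u₀ = (RelaxAux.Sf α αc s 1 h).re • u₀
      + (RelaxAux.Sf α αc s 1 h).im • Jclm d u₀ := by
    intro h
    rw [hup, add_sub_cancel_left, RelaxAux.Sf, Complex.re_sum, Complex.im_sum,
      Finset.sum_smul, Finset.sum_smul, ← Finset.sum_add_distrib]
    refine Finset.sum_congr rfl fun k _ => ?_
    have hterm : (αc k : ℂ) * (((α * h : ℝ) : ℂ) * Complex.I) ^ k
        = ((αc k * h ^ k : ℝ) : ℂ) * ((α : ℂ) * Complex.I) ^ k := by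
      push_cast; ring
    rw [hterm, Complex.re_ofReal_mul, Complex.im_ofReal_mul, hLk k, smul_add,
      smul_smul, smul_smul]
  have hJu : ⟪Jclm d u₀, u₀⟫ = 0 := RelaxAux.J_inner_self u₀
  have huJ : ⟪u₀, Jclm d u₀⟫ = 0 := by rw [real_inner_comm]; exact hJu
  have hJJ : ⟪Jclm d u₀, Jclm d u₀⟫ = ‖u₀‖ ^ 2 := by
    rw [RelaxAux.J_inner_J, real_inner_self_eq_norm_sq]
  have hsq : ‖u₀‖ ^ 2 ≠ 0 := pow_ne_zero 2 (norm_ne_zero_iff.mpr hu₀)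
  have hγz : ∀ h : ℝ, γ h
      = (-2 * (RelaxAux.Sf α αc s 1 h).re) / Complex.normSq (RelaxAux.Sf α αc s 1 h) := by
    intro h
    set z := RelaxAux.Sf α αc s 1 h with hz
    have h1 : ⟪u₀ - uplus h, u₀⟫ = -(z.re * ‖u₀‖ ^ 2) := by
      rw [show u₀ - uplus h = -(uplus h - u₀) by abel, inner_neg_left, hdiff h,
        inner_add_left, real_inner_smul_left, real_inner_smul_left, hJu,
        real_inner_self_eq_norm_sq]
      ring
    have h2 : ‖uplus h - u₀‖ ^ 2 = Complex.normSq z * ‖u₀‖ ^ 2 := by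
      rw [← real_inner_self_eq_norm_sq, hdiff h]
      rw [inner_add_left, inner_add_right, inner_add_right, real_inner_smul_left,
        real_inner_smul_left, real_inner_smul_left, real_inner_smul_left,
        real_inner_smul_right, real_inner_smul_right, real_inner_smul_right,
        real_inner_smul_right, hJu, huJ, hJJ, real_inner_self_eq_norm_sq,
        Complex.normSq_apply]
      ring
    rw [hγ, h1, h2]
    rw [show 2 * -(z.re * ‖u₀‖ ^ 2) = (-2 * z.re) * ‖u₀‖ ^ 2 by ring]
    rw [mul_div_mul_right _ _ hsq]
  have hkey := RelaxAux.key_asymp α hα s p hpodd hp1 hps αc hαc hαs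
  exact hkey.congr' (Eventually.of_forall fun h => by simp only [hγz]) (EventuallyEq.refl _ _)
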